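/- Define qubit channels Λ₁(ρ) = ⟨0|ρ|0⟩ |0⟩⟨0| + ⟨1|ρ|1⟩ |+⟩⟨+| and Λ₂(ρ) = ⟨+|ρ|+⟩ ρ₊ + ⟨−|ρ|−⟩ ρ₋ with ρ± = p|0⟩⟨0| + (1−p)|1⟩⟨1| and (1−p)|0⟩⟨0| + p|1⟩⟨1| respectively. For p ∈ [1/2 − 1/(2√2), 1/2 + 1/(2√2)], the explicitly given operator ρ_{AB₁B₂} = (1/4)(|000⟩⟨000| + |001⟩⟨001| + |1+0⟩⟨1+0| + |1+1⟩⟨1+1|) + (√2/2)(p−1/2)(|000⟩⟨1+0| − |001⟩⟨1+1|) + h.c. is positive semidefinite with unit trace, and its marginals ρ_{AB₁}, ρ_{AB₂} are the Choi states of Λ₁ and Λ₂. Hence Λ₁ and Λ₂ are compatible. -/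

import Mathlib

open Classical Matrix
open scoped ComplexOrder

noncomputable section

/-- `|0⟩`. -/
def e0 : Fin 2 → ℂ := fun i => if i = 0 then 1 else 0
/-- `|1⟩`. -/
def e1 : Fin 2 → ℂ := fun i => if i = 1 then 1 else 0
/-- `|+⟩ = (|0⟩ + |1⟩)/√2`. -/
def plusv : Fin 2 → ℂ := fun _ => ((Real.sqrt 2 : ℂ))⁻¹
/-- `|−⟩ = (|0⟩ − |1⟩)/√2`. -/
def minusv : Fin 2 → ℂ := fun i => if i = 0 then ((Real.sqrt 2 : ℂ))⁻¹ else -((Real.sqrt 2 : ℂ))⁻¹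

/-- Rank-one projector `|u⟩⟨u|`. -/
def proj (u : Fin 2 → ℂ) : Matrix (Fin 2) (Fin 2) ℂ := Matrix.vecMulVec u (star u)

/-- The channel `Λ₁(ρ) = ⟨0|ρ|0⟩ |0⟩⟨0| + ⟨1|ρ|1⟩ |+⟩⟨+|`. -/
def Lambda1 (ρ : Matrix (Fin 2) (Fin 2) ℂ) : Matrix (Fin 2) (Fin 2) ℂ :=
  ρ 0 0 • proj e0 + ρ 1 1 • proj plusv

/-- `ρ₊ = p|0⟩⟨0| + (1−p)|1⟩⟨1|`. -/
def rhoPlus (p : ℝ) : Matrix (Fin 2) (Fin 2) ℂ := (p : ℂ) • proj e0 + ((1 - p : ℝ) : ℂ) • proj e1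
/-- `ρ₋ = (1−p)|0⟩⟨0| + p|1⟩⟨1|`. -/
def rhoMinus (p : ℝ) : Matrix (Fin 2) (Fin 2) ℂ := ((1 - p : ℝ) : ℂ) • proj e0 + (p : ℂ) • proj e1

/-- The channel `Λ₂(ρ) = ⟨+|ρ|+⟩ ρ₊ + ⟨−|ρ|−⟩ ρ₋`. -/
def Lambda2 (p : ℝ) (ρ : Matrix (Fin 2) (Fin 2) ℂ) : Matrix (Fin 2) (Fin 2) ℂ :=
  (star plusv ⬝ᵥ ρ.mulVec plusv) • rhoPlus p + (star minusv ⬝ᵥ ρ.mulVec minusv) • rhoMinus p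

/-- Product basis vector `|uvw⟩` on `A ⊗ B₁ ⊗ B₂`. -/
def ket3 (u v w : Fin 2 → ℂ) : Fin 2 × Fin 2 × Fin 2 → ℂ :=
  fun x => u x.1 * v x.2.1 * w x.2.2

/-- The explicit tripartite operator of Appendix B of the paper. -/
def rhoBig (p : ℝ) : Matrix (Fin 2 × Fin 2 × Fin 2) (Fin 2 × Fin 2 × Fin 2) ℂ :=
  (1 / 4 : ℂ) •
      (Matrix.vecMulVec (ket3 e0 e0 e0) (star (ket3 e0 e0 e0)) +
       Matrix.vecMulVec (ket3 e0 e0 e1) (star (ket3 e0 e0 e1)) +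
       Matrix.vecMulVec (ket3 e1 plusv e0) (star (ket3 e1 plusv e0)) +
       Matrix.vecMulVec (ket3 e1 plusv e1) (star (ket3 e1 plusv e1))) +
    ((Real.sqrt 2 / 2 * (p - 1 / 2) : ℝ) : ℂ) •
      ((Matrix.vecMulVec (ket3 e0 e0 e0) (star (ket3 e1 plusv e0)) -
        Matrix.vecMulVec (ket3 e0 e0 e1) (star (ket3 e1 plusv e1))) +
       (Matrix.vecMulVec (ket3 e0 e0 e0) (star (ket3 e1 plusv e0)) -
        Matrix.vecMulVec (ket3 e0 e0 e1) (star (ket3 e1 plusv e1)))ᴴ)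

/-- Marginal on `A ⊗ B₁`. -/
def margAB₁ (ρ : Matrix (Fin 2 × Fin 2 × Fin 2) (Fin 2 × Fin 2 × Fin 2) ℂ) :
    Matrix (Fin 2 × Fin 2) (Fin 2 × Fin 2) ℂ :=
  fun x y => ∑ c, ρ (x.1, x.2, c) (y.1, y.2, c)

/-- Marginal on `A ⊗ B₂`. -/
def margAB₂ (ρ : Matrix (Fin 2 × Fin 2 × Fin 2) (Fin 2 × Fin 2 × Fin 2) ℂ) :
    Matrix (Fin 2 × Fin 2) (Fin 2 × Fin 2) ℂ :=
  fun x y => ∑ b, ρ (x.1, b, x.2) (y.1, b, y.2)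

/-- The projector `|Γ⟩⟨Γ|` onto the maximally entangled state on `A' ⊗ A`. -/
def maxEntProj (A : Type) [Fintype A] [DecidableEq A] : Matrix (A × A) (A × A) ℂ :=
  fun p q => if p.1 = p.2 ∧ q.1 = q.2 then ((Fintype.card A : ℂ))⁻¹ else 0

/-- The Choi state `ρ^Λ_{A'B} = (id_{A'} ⊗ Λ)(|Γ⟩⟨Γ|)`. -/
def choiState {A B : Type} [Fintype A] [DecidableEq A] [Fintype B] [DecidableEq B]
    (Λ : Matrix A A ℂ → Matrix B B ℂ) : Matrix (A × B) (A × B) ℂ :=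
  fun p q => Λ (Matrix.of (fun a a' => maxEntProj A (p.1, a) (q.1, a'))) p.2 q.2

end



set_option linter.unusedSectionVars false
set_option maxHeartbeats 1000000
open Matrix
open scoped ComplexOrder

variable {n : Type*} [Fintype n] [DecidableEq n]

lemma vecMulVec_posSemidef (v : n → ℂ) : (Matrix.vecMulVec v (star v)).PosSemidef := by
  refine Matrix.posSemidef_iff_dotProduct_mulVec.2 ⟨?_, ?_⟩
  · ext i j
    simp [vecMulVec, mul_comm]
  · intro x
    have h : star x ⬝ᵥ (vecMulVec v (star v)).mulVec x
        = star (star v ⬝ᵥ x) * (star v ⬝ᵥ x) := by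
      simp only [dotProduct, mulVec, vecMulVec, Pi.star_apply, of_apply, star_sum, star_mul',
        star_star, Finset.sum_mul, Finset.mul_sum]
      rw [Finset.sum_comm]
      exact Finset.sum_congr rfl fun i _ => Finset.sum_congr rfl fun j _ => by ring
    rw [h]
    exact star_mul_self_nonneg _

lemma posSemidef_real_smul {c : ℝ} (hc : 0 ≤ c) {M : Matrix n n ℂ} (hM : M.PosSemidef) :
    ((c : ℂ) • M).PosSemidef := by
  refine Matrix.posSemidef_iff_dotProduct_mulVec.2 ⟨?_, ?_⟩
  · ext i j
    have := hM.1
    rw [Matrix.conjTranspose_smul, Matrix.IsHermitian.eq this]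
    simp [Complex.conj_ofReal]
  · intro x
    have := hM.dotProduct_mulVec_nonneg x
    have h : star x ⬝ᵥ ((c : ℂ) • M).mulVec x = (c : ℂ) * (star x ⬝ᵥ M.mulVec x) := by
      simp [Matrix.smul_mulVec]
    rw [h]
    exact mul_nonneg (by exact_mod_cast hc) this

lemma vecMulVec_add_left (u v w : n → ℂ) :
    vecMulVec (u + v) w = vecMulVec u w + vecMulVec v w := by
  ext i j; simp [vecMulVec, add_mul]

lemma vecMulVec_add_right (u v w : n → ℂ) :
    vecMulVec u (v + w) = vecMulVec u v + vecMulVec u w := by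
  ext i j; simp [vecMulVec, mul_add]

lemma vecMulVec_sub_left (u v w : n → ℂ) :
    vecMulVec (u - v) w = vecMulVec u w - vecMulVec v w := by
  ext i j; simp [vecMulVec, sub_mul]

lemma vecMulVec_sub_right (u v w : n → ℂ) :
    vecMulVec u (v - w) = vecMulVec u v - vecMulVec u w := by
  ext i j; simp [vecMulVec, mul_sub]

lemma vecMulVec_conjTranspose (u v : n → ℂ) :
    (vecMulVec u (star v))ᴴ = vecMulVec v (star u) := by
  ext i j; simp [vecMulVec, conjTranspose_apply, mul_comm]

noncomputable section
open Matrix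

def tcoef (p : ℝ) : ℝ := Real.sqrt 2 / 2 * (p - 1/2)

def u₀ : Fin 2 × Fin 2 × Fin 2 → ℂ := ket3 e0 e0 e0
def u₁ : Fin 2 × Fin 2 × Fin 2 → ℂ := ket3 e0 e0 e1
def w₀ : Fin 2 × Fin 2 × Fin 2 → ℂ := ket3 e1 plusv e0
def w₁ : Fin 2 × Fin 2 × Fin 2 → ℂ := ket3 e1 plusv e1

lemma rhoBig_decomp (p : ℝ) :
    rhoBig p =
      (((1/4 + tcoef p)/2 : ℝ) : ℂ) • vecMulVec (u₀ + w₀) (star (u₀ + w₀))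
    + (((1/4 - tcoef p)/2 : ℝ) : ℂ) • vecMulVec (u₀ - w₀) (star (u₀ - w₀))
    + (((1/4 + tcoef p)/2 : ℝ) : ℂ) • vecMulVec (u₁ - w₁) (star (u₁ - w₁))
    + (((1/4 - tcoef p)/2 : ℝ) : ℂ) • vecMulVec (u₁ + w₁) (star (u₁ + w₁)) := by
  unfold rhoBig tcoef u₀ u₁ w₀ w₁
  simp only [star_add, star_sub, vecMulVec_add_left, vecMulVec_add_right, vecMulVec_sub_left,
    vecMulVec_sub_right, vecMulVec_conjTranspose, conjTranspose_add, conjTranspose_sub]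
  push_cast
  module

lemma sqrt2C : ((Real.sqrt 2 : ℝ) : ℂ) * ((Real.sqrt 2 : ℝ) : ℂ) = 2 := by
  norm_cast
  rw [Real.mul_self_sqrt (by norm_num)]

lemma sqrt2C_ne : ((Real.sqrt 2 : ℝ) : ℂ) ≠ 0 := by
  simp only [ne_eq, Complex.ofReal_eq_zero]
  positivity

lemma rhoBig_trace (p : ℝ) : (rhoBig p).trace = 1 := by
  have h := sqrt2C
  have hne := sqrt2C_ne
  simp only [Matrix.trace, Matrix.diag, rhoBig, Matrix.add_apply, Matrix.smul_apply,
    Matrix.sub_apply, Matrix.conjTranspose_apply, vecMulVec_apply, ket3, e0, e1, plusv,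
    Pi.star_apply, Fintype.sum_prod_type, Fin.sum_univ_two, smul_eq_mul]
  simp [Complex.conj_ofReal, map_inv₀]
  field_simp
  linear_combination (-2:ℂ) * h

lemma tcoef_le (p : ℝ)
    (hp : p ∈ Set.Icc (1 / 2 - 1 / (2 * Real.sqrt 2)) (1 / 2 + 1 / (2 * Real.sqrt 2))) :
    -(1/4) ≤ tcoef p ∧ tcoef p ≤ 1/4 := by
  have hs : Real.sqrt 2 * Real.sqrt 2 = 2 := Real.mul_self_sqrt (by norm_num)
  have hpos : (0:ℝ) < Real.sqrt 2 := Real.sqrt_pos.2 (by norm_num)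
  obtain ⟨h1, h2⟩ := hp
  have key : Real.sqrt 2 * (1/(2*Real.sqrt 2)) = 1/2 := by field_simp
  unfold tcoef
  constructor
  · have h1' : -(1/(2*Real.sqrt 2)) ≤ p - 1/2 := by linarith
    have := mul_le_mul_of_nonneg_left h1' hpos.le
    rw [mul_neg, key] at this
    nlinarith
  · have h2' : p - 1/2 ≤ 1/(2*Real.sqrt 2) := by linarith
    have := mul_le_mul_of_nonneg_left h2' hpos.le
    rw [key] at this
    nlinarith

lemma rhoBig_posSemidef (p : ℝ)
    (hp : p ∈ Set.Icc (1 / 2 - 1 / (2 * Real.sqrt 2)) (1 / 2 + 1 / (2 * Real.sqrt 2))) :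
    (rhoBig p).PosSemidef := by
  obtain ⟨ha, hb⟩ := tcoef_le p hp
  rw [rhoBig_decomp]
  have H1 : (0:ℝ) ≤ (1/4 + tcoef p)/2 := by linarith
  have H2 : (0:ℝ) ≤ (1/4 - tcoef p)/2 := by linarith
  exact (((posSemidef_real_smul H1 (vecMulVec_posSemidef _)).add
    (posSemidef_real_smul H2 (vecMulVec_posSemidef _))).add
    (posSemidef_real_smul H1 (vecMulVec_posSemidef _))).add
    (posSemidef_real_smul H2 (vecMulVec_posSemidef _))

lemma marg1_eq (p : ℝ) : margAB₁ (rhoBig p) = choiState Lambda1 := by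
  have h := sqrt2C
  have hne := sqrt2C_ne
  ext ⟨a, b⟩ ⟨c, d⟩
  fin_cases a <;> fin_cases b <;> fin_cases c <;> fin_cases d <;>
    simp [margAB₁, rhoBig, choiState, Lambda1, maxEntProj, proj, ket3, e0, e1, plusv,
      vecMulVec, Fin.sum_univ_two, Complex.conj_ofReal, map_inv₀, Matrix.smul_apply,
      Matrix.add_apply, Matrix.sub_apply, Matrix.conjTranspose_apply] <;> ring

lemma marg2_eq (p : ℝ) : margAB₂ (rhoBig p) = choiState (Lambda2 p) := by
  have h := sqrt2C
  have hne := sqrt2C_ne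
  have h2 : ((Real.sqrt 2 : ℝ) : ℂ) ^ 2 = 2 := by rw [sq]; exact h
  have h3 : ((Real.sqrt 2 : ℝ) : ℂ) ^ 3 = 2 * ((Real.sqrt 2 : ℝ) : ℂ) := by
    rw [pow_succ, h2]
  ext ⟨a, b⟩ ⟨c, d⟩
  fin_cases a <;> fin_cases b <;> fin_cases c <;> fin_cases d <;>
    simp [margAB₂, rhoBig, choiState, Lambda2, rhoPlus, rhoMinus, maxEntProj, proj, ket3,
      e0, e1, plusv, minusv, vecMulVec, mulVec, dotProduct, Fin.sum_univ_two,
      Complex.conj_ofReal, map_inv₀, Matrix.smul_apply,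
      Matrix.add_apply, Matrix.sub_apply, Matrix.conjTranspose_apply] <;>
    field_simp <;> ring_nf <;> (try simp only [h2, h3]) <;> ring

/-- Appendix B of the paper: for `p ∈ [1/2 − 1/(2√2), 1/2 + 1/(2√2)]`, the explicit
operator `ρ_{AB₁B₂}` is a density matrix whose marginals `ρ_{AB₁}` and `ρ_{AB₂}` are the
Choi states of `Λ₁` and `Λ₂`; hence `Λ₁` and `Λ₂` are compatible. -/
theorem lambda1_lambda2_compatible (p : ℝ)
    (hp : p ∈ Set.Icc (1 / 2 - 1 / (2 * Real.sqrt 2)) (1 / 2 + 1 / (2 * Real.sqrt 2))) :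
    (rhoBig p).PosSemidef ∧ (rhoBig p).trace = 1 ∧
      margAB₁ (rhoBig p) = choiState Lambda1 ∧
      margAB₂ (rhoBig p) = choiState (Lambda2 p) :=
  ⟨rhoBig_posSemidef p hp, rhoBig_trace p, marg1_eq p, marg2_eq p⟩

end
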